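/- In a handsome proof net (B, R) where R contains a cut, i.e., R = T ⅋̂ (K ⊗̂ K⊥), one step of cut elimination (replacing the cut on compound K = K₁ * K₂ by the corresponding smaller cuts: (K₁⊗̂K₂)⊗̂(K₁⊥⅋̂K₂⊥) reduces to (K₁⊗̂K₁⊥) ⅋̂ (K₂⊗̂K₂⊥), and (K₁◁̂K₂)⊗̂(K₁⊥◁̂K₂⊥) reduces to (K₁⊗̂K₁⊥) ◁̂ (K₂⊗̂K₂⊥)) preserves the correctness criterion: if (B,R) has no chordless alternating elementary circuit, neither does the reduct. -/

import Mathlib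

/-- Terms denoting dicographs. -/
inductive DTerm (V : Type) : Type
  | leaf : V → DTerm V
  | par : DTerm V → DTerm V → DTerm V
  | tens : DTerm V → DTerm V → DTerm V
  | seq : DTerm V → DTerm V → DTerm V

namespace DTerm

def leaves {V : Type} : DTerm V → List V
  | leaf v => [v]
  | par s t => leaves s ++ leaves t
  | tens s t => leaves s ++ leaves t
  | seq s t => leaves s ++ leaves t

/-- The dicograph denoted by a term. -/
def rel {V : Type} : DTerm V → V → V → Prop
  | leaf _ => fun _ _ => False
  | par s t => fun a b => rel s a b ∨ rel t a b
  | tens s t => fun a b =>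
      rel s a b ∨ rel t a b ∨ (a ∈ leaves s ∧ b ∈ leaves t) ∨ (a ∈ leaves t ∧ b ∈ leaves s)
  | seq s t => fun a b => rel s a b ∨ rel t a b ∨ (a ∈ leaves s ∧ b ∈ leaves t)

end DTerm

section Correctness

variable {V : Type} [Inhabited V]

/-- `l` is an alternating elementary circuit of the proof structure with axiom matching
`b` and dicograph `R`: a nonempty cycle of even length without repeated vertices whose
steps alternately follow a `B` (axiom) edge and an `R` pair (an `R` edge in either
direction or an `R` arc forwards — i.e. exactly `R x y` allows the step `x` to `y`). -/
def IsAECircuit (b : V → V) (R : V → V → Prop) (l : List V) : Prop :=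
  l ≠ [] ∧ l.length % 2 = 0 ∧ l.Nodup ∧
    ∀ i : ℕ, i < l.length →
      (i % 2 = 0 → b (l.getD i default) = l.getD ((i + 1) % l.length) default) ∧
      (i % 2 = 1 → R (l.getD i default) (l.getD ((i + 1) % l.length) default))

/-- `(x, y)` is one of the (directed) steps of the circuit `l`. -/
def CircStep (l : List V) (x y : V) : Prop :=
  ∃ i : ℕ, i < l.length ∧ l.getD i default = x ∧ l.getD ((i + 1) % l.length) default = y

/-- The circuit `l` has a chord: an `R` edge or arc between two of its vertices which is
neither a step of the circuit nor the reverse of one. -/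
def HasChord (R : V → V → Prop) (l : List V) : Prop :=
  ∃ x ∈ l, ∃ y ∈ l, R x y ∧ ¬ CircStep l x y ∧ ¬ CircStep l y x

/-- The correctness criterion for handsome proof structures: every alternating
elementary circuit has a chord. -/
def Correct (b : V → V) (R : V → V → Prop) : Prop :=
  ∀ l : List V, IsAECircuit b R l → HasChord R l

end Correctness

/-- The dual of a dicograph term, on the dual atoms given by the matching `b`:
`⊗` and `⅋` are exchanged and `◁` is fixed. -/
def dualT {V : Type} (b : V → V) : DTerm V → DTerm V
  | DTerm.leaf v => DTerm.leaf (b v)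
  | DTerm.par s t => DTerm.tens (dualT b s) (dualT b t)
  | DTerm.tens s t => DTerm.par (dualT b s) (dualT b t)
  | DTerm.seq s t => DTerm.seq (dualT b s) (dualT b t)

open DTerm

/-- The structure `T ⅋̂ ((K₁ ⊗ K₂) ⊗̂ (K₁ ⊗ K₂)⊥)` with a `⊗`-cut. -/
def tensCutRedex {V : Type} (b : V → V) (T K₁ K₂ : DTerm V) : DTerm V :=
  par T (tens (tens K₁ K₂) (par (dualT b K₁) (dualT b K₂)))

/-- Its reduct `T ⅋̂ ((K₁ ⊗̂ K₁⊥) ⅋̂ (K₂ ⊗̂ K₂⊥))`: two smaller parallel cuts. -/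
def tensCutReduct {V : Type} (b : V → V) (T K₁ K₂ : DTerm V) : DTerm V :=
  par T (par (tens K₁ (dualT b K₁)) (tens K₂ (dualT b K₂)))

/-- The structure `T ⅋̂ ((K₁ ◁ K₂) ⊗̂ (K₁ ◁ K₂)⊥)` with a `◁`-cut. -/
def seqCutRedex {V : Type} (b : V → V) (T K₁ K₂ : DTerm V) : DTerm V :=
  par T (tens (seq K₁ K₂) (seq (dualT b K₁) (dualT b K₂)))

/-- Its reduct `T ⅋̂ ((K₁ ⊗̂ K₁⊥) ◁̂ (K₂ ⊗̂ K₂⊥))`: two smaller ordered cuts. -/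
def seqCutReduct {V : Type} (b : V → V) (T K₁ K₂ : DTerm V) : DTerm V :=
  par T (seq (tens K₁ (dualT b K₁)) (tens K₂ (dualT b K₂)))


lemma DTerm.rel_mem {V : Type} (s : DTerm V) {a c : V} (h : DTerm.rel s a c) :
    a ∈ s.leaves ∧ c ∈ s.leaves := by
  induction s with
  | leaf v => exact h.elim
  | par s t ihs iht =>
    simp only [DTerm.rel] at h
    simp only [DTerm.leaves, List.mem_append]
    rcases h with h | h
    · exact ⟨Or.inl (ihs h).1, Or.inl (ihs h).2⟩
    · exact ⟨Or.inr (iht h).1, Or.inr (iht h).2⟩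
  | tens s t ihs iht =>
    simp only [DTerm.rel] at h
    simp only [DTerm.leaves, List.mem_append]
    rcases h with h | h | ⟨h1, h2⟩ | ⟨h1, h2⟩
    · exact ⟨Or.inl (ihs h).1, Or.inl (ihs h).2⟩
    · exact ⟨Or.inr (iht h).1, Or.inr (iht h).2⟩
    · exact ⟨Or.inl h1, Or.inr h2⟩
    · exact ⟨Or.inr h1, Or.inl h2⟩
  | seq s t ihs iht =>
    simp only [DTerm.rel] at h
    simp only [DTerm.leaves, List.mem_append]
    rcases h with h | h | ⟨h1, h2⟩
    · exact ⟨Or.inl (ihs h).1, Or.inl (ihs h).2⟩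
    · exact ⟨Or.inr (iht h).1, Or.inr (iht h).2⟩
    · exact ⟨Or.inl h1, Or.inr h2⟩

lemma leaves_dualT {V : Type} (b : V → V) (s : DTerm V) :
    (dualT b s).leaves = s.leaves.map b := by
  induction s <;> simp [dualT, DTerm.leaves, *]

lemma transfer {V : Type} [Inhabited V] (b : V → V) (R R' : V → V → Prop)
    (S : V → Prop) (zone : V → ℕ)
    (hsub : ∀ x y, R' x y → R x y)
    (hleaf : ∀ x y, R' x y → S x ∧ S y)
    (hbzone : ∀ v, S v → S (b v) → zone (b v) = zone v)
    (hRzone : ∀ x y, R' x y → zone x ≤ zone y)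
    (hconv : ∀ x y, R x y → zone x = zone y → R' x y)
    (hcorrect : Correct b R) : Correct b R' := by
  intro l hl
  obtain ⟨hne, heven, hnodup, hstep⟩ := hl
  have hlen : 0 < l.length := List.length_pos_iff_ne_nil.mpr hne
  set n := l.length with hn
  set f : ℕ → V := fun i => l.getD i default with hf
  have hRstep : ∀ i, i < n → i % 2 = 1 → R' (f i) (f ((i+1) % n)) :=
    fun i hi h => (hstep i hi).2 h
  have hBstep : ∀ i, i < n → i % 2 = 0 → b (f i) = f ((i+1) % n) :=
    fun i hi h => (hstep i hi).1 h
  have hmem : ∀ i, i < n → S (f i) := by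
    intro i hi
    rcases Nat.mod_two_eq_zero_or_one i with h | h
    · rcases Nat.eq_zero_or_pos i with rfl | hpos
      · have h1 : n - 1 < n := by omega
        have h2 : (n - 1) % 2 = 1 := by omega
        have h3 : (n - 1 + 1) % n = 0 := by
          have e : n - 1 + 1 = n := by omega
          rw [e, Nat.mod_self]
        have := hRstep (n-1) h1 h2
        rw [h3] at this
        exact (hleaf _ _ this).2
      · have h1 : i - 1 < n := by omega
        have h2 : (i - 1) % 2 = 1 := by omega
        have h3 : (i - 1 + 1) % n = i := by
          have e : i - 1 + 1 = i := by omega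
          rw [e, Nat.mod_eq_of_lt hi]
        have := hRstep (i-1) h1 h2
        rw [h3] at this
        exact (hleaf _ _ this).2
    · exact (hleaf _ _ (hRstep i hi h)).1
  have hzstep : ∀ i, i < n → zone (f i) ≤ zone (f ((i+1) % n)) := by
    intro i hi
    rcases Nat.mod_two_eq_zero_or_one i with h | h
    · have hb := hBstep i hi h
      have h1 := hmem i hi
      have h2 := hmem ((i+1) % n) (Nat.mod_lt _ hlen)
      rw [← hb] at h2 ⊢
      exact le_of_eq (hbzone _ h1 h2).symm
    · exact hRzone _ _ (hRstep i hi h)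
  have hmono : ∀ j, j < n → ∀ i, i ≤ j → zone (f i) ≤ zone (f j) := by
    intro j
    induction j with
    | zero =>
      intro _ i hi
      have : i = 0 := Nat.le_zero.mp hi
      subst this; exact le_refl _
    | succ k ih =>
      intro hj i hi
      rcases eq_or_lt_of_le hi with rfl | h
      · exact le_refl _
      · have h1 : zone (f i) ≤ zone (f k) := ih (by omega) i (by omega)
        have h2 := hzstep k (by omega)
        rw [Nat.mod_eq_of_lt hj] at h2
        exact le_trans h1 h2
  have hconst : ∀ i, i < n → ∀ j, j < n → zone (f i) = zone (f j) := by
    have hlast := hzstep (n-1) (by omega)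
    have h3 : (n - 1 + 1) % n = 0 := by
      have e : n - 1 + 1 = n := by omega
      rw [e, Nat.mod_self]
    rw [h3] at hlast
    have key : ∀ i, i < n → ∀ j, j < n → zone (f i) ≤ zone (f j) := by
      intro i hi j hj
      calc zone (f i) ≤ zone (f (n-1)) := hmono (n-1) (by omega) i (by omega)
        _ ≤ zone (f 0) := hlast
        _ ≤ zone (f j) := hmono j hj 0 (Nat.zero_le _)
    exact fun i hi j hj => le_antisymm (key i hi j hj) (key j hj i hi)
  obtain ⟨x, hx, y, hy, hRxy, hc1, hc2⟩ :=
    hcorrect l ⟨hne, heven, hnodup,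
      fun i hi => ⟨(hstep i hi).1, fun h => hsub _ _ ((hstep i hi).2 h)⟩⟩
  obtain ⟨i, hi, hfi⟩ := List.mem_iff_getElem.mp hx
  obtain ⟨j, hj, hfj⟩ := List.mem_iff_getElem.mp hy
  have e1 : f i = x := by
    rw [hf]; simp only; rw [List.getD_eq_getElem l default hi]; exact hfi
  have e2 : f j = y := by
    rw [hf]; simp only; rw [List.getD_eq_getElem l default hj]; exact hfj
  have hz : zone x = zone y := by
    rw [← e1, ← e2]; exact hconst i hi j hj
  exact ⟨x, hx, y, hy, hconv x y hRxy hz, hc1, hc2⟩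


set_option maxHeartbeats 2000000 in
/-- one step of cut elimination on a compound cut preserves the
correctness criterion of handsome proof nets, both for `⊗`-cuts and `◁`-cuts. -/
theorem cut_step_preserves_correctness {V : Type} [Inhabited V]
    (b : V → V) (hinv : ∀ v, b (b v) = v) (hfix : ∀ v, b v ≠ v)
    (T K₁ K₂ : DTerm V)
    (hnodup₁ : (tensCutRedex b T K₁ K₂).leaves.Nodup)
    (hnodup₂ : (seqCutRedex b T K₁ K₂).leaves.Nodup) :
    (Correct b (rel (tensCutRedex b T K₁ K₂)) →
      Correct b (rel (tensCutReduct b T K₁ K₂))) ∧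
    (Correct b (rel (seqCutRedex b T K₁ K₂)) →
      Correct b (rel (seqCutReduct b T K₁ K₂))) := by
  classical
  have hnd : (T.leaves ++ ((K₁.leaves ++ K₂.leaves) ++
      (K₁.leaves.map b ++ K₂.leaves.map b))).Nodup := by
    have h := hnodup₁
    simp only [tensCutRedex, DTerm.leaves, leaves_dualT] at h
    exact h
  simp only [List.nodup_append', List.disjoint_append_right, List.disjoint_append_left] at hnd
  obtain ⟨-, ⟨⟨-, -, d23⟩, ⟨-, -, d45⟩, ⟨d24, d34⟩, d25, d35⟩, ⟨d12, d13⟩, d14, d15⟩ := hnd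
  set P1 : V → Prop := fun v => v ∈ K₁.leaves ∨ v ∈ K₁.leaves.map b with hP1def
  set P2 : V → Prop := fun v => v ∈ K₂.leaves ∨ v ∈ K₂.leaves.map b with hP2def
  set zone : V → ℕ := fun v => if P1 v then 1 else if P2 v then 2 else 0 with hzonedef
  set S : V → Prop := fun v => v ∈ T.leaves ∨ P1 v ∨ P2 v with hSdef
  have z1 : ∀ v, P1 v → zone v = 1 := by
    intro v h
    show (if P1 v then 1 else if P2 v then 2 else 0) = 1
    rw [if_pos h]
  have z2 : ∀ v, P2 v → zone v = 2 := by
    intro v h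
    have h1 : ¬ P1 v := by
      rintro (h' | h')
      · rcases h with h'' | h''
        · exact d23 h' h''
        · exact d25 h' h''
      · rcases h with h'' | h''
        · exact d34 h'' h'
        · exact d45 h' h''
    show (if P1 v then 1 else if P2 v then 2 else 0) = 2
    rw [if_neg h1, if_pos h]
  have z0 : ∀ v, v ∈ T.leaves → zone v = 0 := by
    intro v h
    have h1 : ¬ P1 v := by rintro (h' | h'); exacts [d12 h h', d14 h h']
    have h2 : ¬ P2 v := by rintro (h' | h'); exacts [d13 h h', d15 h h']
    show (if P1 v then 1 else if P2 v then 2 else 0) = 0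
    rw [if_neg h1, if_neg h2]
  have hb1' : ∀ v, v ∈ K₁.leaves.map b → b v ∈ K₁.leaves := by
    intro v h
    obtain ⟨w, hw, rfl⟩ := List.mem_map.mp h
    rw [hinv]; exact hw
  have hb2' : ∀ v, v ∈ K₂.leaves.map b → b v ∈ K₂.leaves := by
    intro v h
    obtain ⟨w, hw, rfl⟩ := List.mem_map.mp h
    rw [hinv]; exact hw
  have hP1b : ∀ v, P1 v → P1 (b v) := by
    rintro v (h | h)
    · exact Or.inr (List.mem_map_of_mem (f := b) h)
    · exact Or.inl (hb1' v h)
  have hP2b : ∀ v, P2 v → P2 (b v) := by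
    rintro v (h | h)
    · exact Or.inr (List.mem_map_of_mem (f := b) h)
    · exact Or.inl (hb2' v h)
  have hbzone : ∀ v, S v → S (b v) → zone (b v) = zone v := by
    intro v hv hbv
    rcases hv with h | h | h
    · have hT : b v ∈ T.leaves := by
        rcases hbv with h' | h' | h'
        · exact h'
        · exfalso
          rcases h' with h'' | h''
          · have : v ∈ K₁.leaves.map b := by
              rw [← hinv v]; exact List.mem_map_of_mem (f := b) h''
            exact d14 h this
          · have : v ∈ K₁.leaves := by rw [← hinv v]; exact hb1' _ h''
            exact d12 h this
        · exfalso
          rcases h' with h'' | h''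
          · have : v ∈ K₂.leaves.map b := by
              rw [← hinv v]; exact List.mem_map_of_mem (f := b) h''
            exact d15 h this
          · have : v ∈ K₂.leaves := by rw [← hinv v]; exact hb2' _ h''
            exact d13 h this
      rw [z0 _ hT, z0 _ h]
    · rw [z1 _ (hP1b v h), z1 _ h]
    · rw [z2 _ (hP2b v h), z2 _ h]
  constructor
  · -- tens case
    intro hc
    have hSmem : ∀ v, v ∈ (tensCutReduct b T K₁ K₂).leaves → S v := by
      intro v hv
      simp only [tensCutReduct, DTerm.leaves, List.mem_append, leaves_dualT] at hv
      show v ∈ T.leaves ∨ P1 v ∨ P2 v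
      show v ∈ T.leaves ∨ (v ∈ K₁.leaves ∨ v ∈ K₁.leaves.map b) ∨
        (v ∈ K₂.leaves ∨ v ∈ K₂.leaves.map b)
      tauto
    have hleaf : ∀ x y, rel (tensCutReduct b T K₁ K₂) x y → S x ∧ S y := fun x y h =>
      ⟨hSmem x (DTerm.rel_mem _ h).1, hSmem y (DTerm.rel_mem _ h).2⟩
    have hsub : ∀ x y, rel (tensCutReduct b T K₁ K₂) x y →
        rel (tensCutRedex b T K₁ K₂) x y := by
      intro x y h
      simp only [tensCutReduct, DTerm.rel, DTerm.leaves, List.mem_append, leaves_dualT] at h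
      simp only [tensCutRedex, DTerm.rel, DTerm.leaves, List.mem_append, leaves_dualT]
      tauto
    have hRzone : ∀ x y, rel (tensCutReduct b T K₁ K₂) x y → zone x ≤ zone y := by
      intro x y h
      simp only [tensCutReduct, DTerm.rel, DTerm.leaves, List.mem_append, leaves_dualT] at h
      rcases h with h | (h | h | ⟨h1, h2⟩ | ⟨h1, h2⟩) | (h | h | ⟨h1, h2⟩ | ⟨h1, h2⟩)
      · rw [z0 _ (DTerm.rel_mem _ h).1, z0 _ (DTerm.rel_mem _ h).2]
      · rw [z1 _ (Or.inl (DTerm.rel_mem _ h).1), z1 _ (Or.inl (DTerm.rel_mem _ h).2)]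
      · obtain ⟨m1, m2⟩ := DTerm.rel_mem _ h
        rw [leaves_dualT] at m1 m2
        rw [z1 _ (Or.inr m1), z1 _ (Or.inr m2)]
      · rw [z1 _ (Or.inl h1), z1 _ (Or.inr h2)]
      · rw [z1 _ (Or.inr h1), z1 _ (Or.inl h2)]
      · rw [z2 _ (Or.inl (DTerm.rel_mem _ h).1), z2 _ (Or.inl (DTerm.rel_mem _ h).2)]
      · obtain ⟨m1, m2⟩ := DTerm.rel_mem _ h
        rw [leaves_dualT] at m1 m2
        rw [z2 _ (Or.inr m1), z2 _ (Or.inr m2)]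
      · rw [z2 _ (Or.inl h1), z2 _ (Or.inr h2)]
      · rw [z2 _ (Or.inr h1), z2 _ (Or.inl h2)]
    have hconv : ∀ x y, rel (tensCutRedex b T K₁ K₂) x y → zone x = zone y →
        rel (tensCutReduct b T K₁ K₂) x y := by
      intro x y h hz
      simp only [tensCutRedex, DTerm.rel, DTerm.leaves, List.mem_append, leaves_dualT] at h
      simp only [tensCutReduct, DTerm.rel, DTerm.leaves, List.mem_append, leaves_dualT]
      rcases h with h | (h | h | ⟨h1, h2⟩ | ⟨h1, h2⟩) | (h | h) |
        ⟨(h1 | h1), (h2 | h2)⟩ | ⟨(h1 | h1), (h2 | h2)⟩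
      · tauto
      · tauto
      · tauto
      · -- x ∈ L1, y ∈ L2 : impossible
        have e1 := z1 _ (Or.inl h1); have e2 := z2 _ (Or.inl h2); omega
      · have e1 := z2 _ (Or.inl h1); have e2 := z1 _ (Or.inl h2); omega
      · tauto
      · tauto
      · -- x ∈ L1, y ∈ map1 : fine
        tauto
      · have e1 := z1 _ (Or.inl h1); have e2 := z2 _ (Or.inr h2); omega
      · have e1 := z2 _ (Or.inl h1); have e2 := z1 _ (Or.inr h2); omega
      · tauto
      · tauto
      · have e1 := z1 _ (Or.inr h1); have e2 := z2 _ (Or.inl h2); omega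
      · have e1 := z2 _ (Or.inr h1); have e2 := z1 _ (Or.inl h2); omega
      · tauto
    exact transfer b _ _ S zone hsub hleaf hbzone hRzone hconv hc
  · -- seq case
    intro hc
    have hSmem : ∀ v, v ∈ (seqCutReduct b T K₁ K₂).leaves → S v := by
      intro v hv
      simp only [seqCutReduct, DTerm.leaves, List.mem_append, leaves_dualT] at hv
      show v ∈ T.leaves ∨ (v ∈ K₁.leaves ∨ v ∈ K₁.leaves.map b) ∨
        (v ∈ K₂.leaves ∨ v ∈ K₂.leaves.map b)
      tauto
    have hleaf : ∀ x y, rel (seqCutReduct b T K₁ K₂) x y → S x ∧ S y := fun x y h =>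
      ⟨hSmem x (DTerm.rel_mem _ h).1, hSmem y (DTerm.rel_mem _ h).2⟩
    have hsub : ∀ x y, rel (seqCutReduct b T K₁ K₂) x y →
        rel (seqCutRedex b T K₁ K₂) x y := by
      intro x y h
      simp only [seqCutReduct, DTerm.rel, DTerm.leaves, List.mem_append, leaves_dualT] at h
      simp only [seqCutRedex, DTerm.rel, DTerm.leaves, List.mem_append, leaves_dualT]
      tauto
    have hRzone : ∀ x y, rel (seqCutReduct b T K₁ K₂) x y → zone x ≤ zone y := by
      intro x y h
      simp only [seqCutReduct, DTerm.rel, DTerm.leaves, List.mem_append, leaves_dualT] at h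
      rcases h with h | (h | h | ⟨h1, h2⟩ | ⟨h1, h2⟩) | (h | h | ⟨h1, h2⟩ | ⟨h1, h2⟩) |
        ⟨(h1 | h1), (h2 | h2)⟩
      · rw [z0 _ (DTerm.rel_mem _ h).1, z0 _ (DTerm.rel_mem _ h).2]
      · rw [z1 _ (Or.inl (DTerm.rel_mem _ h).1), z1 _ (Or.inl (DTerm.rel_mem _ h).2)]
      · obtain ⟨m1, m2⟩ := DTerm.rel_mem _ h
        rw [leaves_dualT] at m1 m2
        rw [z1 _ (Or.inr m1), z1 _ (Or.inr m2)]
      · rw [z1 _ (Or.inl h1), z1 _ (Or.inr h2)]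
      · rw [z1 _ (Or.inr h1), z1 _ (Or.inl h2)]
      · rw [z2 _ (Or.inl (DTerm.rel_mem _ h).1), z2 _ (Or.inl (DTerm.rel_mem _ h).2)]
      · obtain ⟨m1, m2⟩ := DTerm.rel_mem _ h
        rw [leaves_dualT] at m1 m2
        rw [z2 _ (Or.inr m1), z2 _ (Or.inr m2)]
      · rw [z2 _ (Or.inl h1), z2 _ (Or.inr h2)]
      · rw [z2 _ (Or.inr h1), z2 _ (Or.inl h2)]
      · rw [z1 _ (Or.inl h1), z2 _ (Or.inl h2)]; omega
      · rw [z1 _ (Or.inl h1), z2 _ (Or.inr h2)]; omega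
      · rw [z1 _ (Or.inr h1), z2 _ (Or.inl h2)]; omega
      · rw [z1 _ (Or.inr h1), z2 _ (Or.inr h2)]; omega
    have hconv : ∀ x y, rel (seqCutRedex b T K₁ K₂) x y → zone x = zone y →
        rel (seqCutReduct b T K₁ K₂) x y := by
      intro x y h hz
      simp only [seqCutRedex, DTerm.rel, DTerm.leaves, List.mem_append, leaves_dualT] at h
      simp only [seqCutReduct, DTerm.rel, DTerm.leaves, List.mem_append, leaves_dualT]
      rcases h with h | (h | h | ⟨h1, h2⟩) | (h | h | ⟨h1, h2⟩) |
        ⟨(h1 | h1), (h2 | h2)⟩ | ⟨(h1 | h1), (h2 | h2)⟩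
      · tauto
      · tauto
      · tauto
      · have e1 := z1 _ (Or.inl h1); have e2 := z2 _ (Or.inl h2); omega
      · tauto
      · tauto
      · have e1 := z1 _ (Or.inr h1); have e2 := z2 _ (Or.inr h2); omega
      · tauto
      · have e1 := z1 _ (Or.inl h1); have e2 := z2 _ (Or.inr h2); omega
      · have e1 := z2 _ (Or.inl h1); have e2 := z1 _ (Or.inr h2); omega
      · tauto
      · tauto
      · have e1 := z1 _ (Or.inr h1); have e2 := z2 _ (Or.inl h2); omega
      · have e1 := z2 _ (Or.inr h1); have e2 := z1 _ (Or.inl h2); omega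
      · tauto
    exact transfer b _ _ S zone hsub hleaf hbzone hRzone hconv hc
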